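/- Let L ∈ {0, 1, …, m}, let g ∈ H, let V = span_ℝ{ K_q : q ∈ ((π/2)·{−1,0,1}^m) ∩ I_L }, and let P_V(g) be the orthogonal projection of g onto V with respect to ⟨·,·⟩_H. Then P_V(g) coincides with g on all of I_L, i.e. (P_V(g))(p) = g(p) for every p ∈ ℝ^m with at most L nonzero coordinates. In particular, if L = m then P_V(g) = g. -/

import Mathlib

open scoped Real BigOperators
open MeasureTheory Filter

noncomputable section

/-- The frequency grid `{-1,0,1}^m`. -/
def Omega (m : ℕ) : Finset (Fin m → ℤ) :=
  Fintype.piFinset fun _ => ({-1, 0, 1} : Finset ℤ)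

/-- `ω ⬝ x = Σ_j ω_j x_j`. -/
def dotZ {m : ℕ} (ω : Fin m → ℤ) (x : Fin m → ℝ) : ℝ := ∑ j, (ω j : ℝ) * x j

/-- The kernel `K(x,z) = (2π)^{-m} Σ_{ω∈{-1,0,1}^m} e^{i ω·(x-z)}` (a real number). -/
def Kker (m : ℕ) (x z : Fin m → ℝ) : ℝ :=
  ((2 * Real.pi) ^ m)⁻¹ *
    (∑ ω ∈ Omega m, Complex.exp (Complex.I * (dotZ ω (x - z) : ℝ))).re

/-- `K_x = K(x, ·)`. -/
def Kfun (m : ℕ) (x : Fin m → ℝ) : (Fin m → ℝ) → ℝ := fun z => Kker m x z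

/-- The space `H` of real functions of the form `Σ_{ω∈{-1,0,1}^m} c_ω e^{i ω·z}`
with `c_{-ω} = conj (c_ω)`. -/
def Hset (m : ℕ) : Set ((Fin m → ℝ) → ℝ) :=
  { g | ∃ c : (Fin m → ℤ) → ℂ,
      (∀ ω, c (-ω) = starRingEnd ℂ (c ω)) ∧
      ∀ z, (g z : ℂ) = ∑ ω ∈ Omega m, c ω * Complex.exp (Complex.I * (dotZ ω z : ℝ)) }

/-- The cube `[-π,π]^m`. -/
def box (m : ℕ) : Set (Fin m → ℝ) := Set.univ.pi fun _ => Set.Icc (-Real.pi) Real.pi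

/-- Inner product `⟨g₁,g₂⟩_H = ∫_{[-π,π]^m} g₁ g₂`. -/
def innerH (m : ℕ) (g₁ g₂ : (Fin m → ℝ) → ℝ) : ℝ := ∫ z in box m, g₁ z * g₂ z

/-- Partial derivative in direction `j`. -/
def partialD {m : ℕ} (j : Fin m) (g : (Fin m → ℝ) → ℝ) : (Fin m → ℝ) → ℝ :=
  fun x => fderiv ℝ g x (Pi.single j 1)

/-- Iterated partial derivative `D^α`. -/
def Dmulti {m : ℕ} (α : Fin m → ℕ) (g : (Fin m → ℝ) → ℝ) : (Fin m → ℝ) → ℝ :=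
  (List.finRange m).foldr (fun j h => (partialD j)^[α j] h) g

/-- The index set `{-1,1}^{|α|}`, with entries indexed as `𝔦_{j,k}`, `j : Fin m`, `k : Fin (α j)`. -/
def ShiftSet {m : ℕ} (α : Fin m → ℕ) : Finset (∀ j : Fin m, Fin (α j) → ℤ) :=
  Fintype.piFinset fun j => Fintype.piFinset fun _ => ({-1, 1} : Finset ℤ)

/-- The product `𝔦^{(1,…,1)}` of all entries of `𝔦`. -/
def signProd {m : ℕ} (α : Fin m → ℕ) (ε : ∀ j : Fin m, Fin (α j) → ℤ) : ℝ :=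
  ∏ j, ∏ k, ((ε j k : ℤ) : ℝ)

/-- The shifted point `p_{α,𝔦}`, with `j`-th coordinate `(π/2)·((Σ_k 𝔦_{j,k}) mod 4)`,
the representative mod 4 taken in `{0,1,2,3}`. -/
def pshift {m : ℕ} (α : Fin m → ℕ) (ε : ∀ j : Fin m, Fin (α j) → ℤ) : Fin m → ℝ :=
  fun j => (Real.pi / 2) * (((∑ k, ε j k) % 4 : ℤ) : ℝ)

/-- The point of the grid `(π/2)·{-1,0,1}^m` coded by `s : Fin m → Fin 3`. -/
def pt3 (m : ℕ) (s : Fin m → Fin 3) : Fin m → ℝ :=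
  fun j => (Real.pi / 2) * (((s j : ℕ) : ℝ) - 1)

/-- The point of the grid `(π/2)·{0,1,2,3}^m` coded by `s : Fin m → Fin 4`. -/
def pt4 (m : ℕ) (s : Fin m → Fin 4) : Fin m → ℝ :=
  fun j => (Real.pi / 2) * ((s j : ℕ) : ℝ)

/-- The grid `(π/2)·{-1,0,1}^m ⊆ ℝ^m`. -/
def grid3 (m : ℕ) : Set (Fin m → ℝ) := Set.range (pt3 m)

/-- The grid `(π/2)·{0,1,2,3}^m ⊆ ℝ^m`. -/
def grid4 (m : ℕ) : Set (Fin m → ℝ) := Set.range (pt4 m)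

/-- `I_d`: points of `ℝ^m` with at most `d` nonzero coordinates. -/
def Iset (m d : ℕ) : Set (Fin m → ℝ) := { z | Set.ncard { j : Fin m | z j ≠ 0 } ≤ d }

/-- Multiindices `α ∈ (ℤ_{≥0})^m` with `|α| ≤ L`, as a finset. -/
def multiIdx (m L : ℕ) : Finset (Fin m → ℕ) :=
  (Fintype.piFinset fun _ : Fin m => Finset.range (L + 1)).filter fun α => ∑ j, α j ≤ L

/-- The sup norm `‖g‖_∞ = sup_z |g(z)|`. -/
def supNorm (m : ℕ) (g : (Fin m → ℝ) → ℝ) : ℝ := ⨆ z : Fin m → ℝ, |g z|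

/-- The norm `‖g‖_H = √⟨g,g⟩_H`. -/
def normH (m : ℕ) (g : (Fin m → ℝ) → ℝ) : ℝ := Real.sqrt (innerH m g g)

end

noncomputable section Aux

open Complex

/-- Cardinal (Lagrange-type) functions for nodes `-π/2, 0, π/2`. -/
def Lfun (t : ℤ) (z : ℝ) : ℂ :=
  (t:ℂ)^2 * ((1 - Complex.cos z)/2) + (1 - (t:ℂ)^2) * Complex.cos z
    + (t:ℂ) * Complex.sin z / 2

/-- grid point attached to `τ ∈ {-1,0,1}^m`. -/
def Qt {m : ℕ} (τ : Fin m → ℤ) : Fin m → ℝ := fun j => Real.pi/2 * (τ j : ℝ)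

lemma mem_Omega {m : ℕ} {ω : Fin m → ℤ} (h : ω ∈ Omega m) (j : Fin m) :
    ω j = -1 ∨ ω j = 0 ∨ ω j = 1 := by
  have := Fintype.mem_piFinset.mp h j
  simpa using this

lemma Lfun_zero_of_ne (t : ℤ) (ht : t = -1 ∨ t = 1) : Lfun t 0 = 0 := by
  rcases ht with h | h <;> simp [Lfun, h]

lemma sum_m101 {M : Type*} [AddCommMonoid M] (f : ℤ → M) :
    ∑ t ∈ ({-1,0,1} : Finset ℤ), f t = f (-1) + (f 0 + f 1) := by
  rw [show ({-1,0,1} : Finset ℤ) = insert (-1) (insert 0 {1}) from rfl,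
    Finset.sum_insert (by decide), Finset.sum_insert (by decide), Finset.sum_singleton]

lemma exp_I_ofReal (r : ℝ) :
    Complex.exp (Complex.I * (r : ℂ)) = (Real.cos r : ℂ) + (Real.sin r : ℂ) * Complex.I := by
  rw [mul_comm, Complex.exp_mul_I, Complex.ofReal_cos, Complex.ofReal_sin]

lemma uni (a : ℤ) (ha : a = -1 ∨ a = 0 ∨ a = 1) (z : ℝ) :
    ∑ t ∈ ({-1,0,1} : Finset ℤ),
        Complex.exp (Complex.I * (((a:ℝ) * (Real.pi/2 * (t:ℝ)) : ℝ) : ℂ)) * Lfun t z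
      = Complex.exp (Complex.I * ((((a:ℝ) * z) : ℝ) : ℂ)) := by
  rw [sum_m101]
  have c1 : Real.cos (Real.pi/2) = 0 := Real.cos_pi_div_two
  have s1 : Real.sin (Real.pi/2) = 1 := Real.sin_pi_div_two
  rcases ha with h | h | h <;> subst h
  · rw [show ((-1:ℤ):ℝ) * (Real.pi/2 * ((-1:ℤ):ℝ)) = Real.pi/2 by push_cast; ring,
      show ((-1:ℤ):ℝ) * (Real.pi/2 * ((0:ℤ):ℝ)) = 0 by push_cast; ring,
      show ((-1:ℤ):ℝ) * (Real.pi/2 * ((1:ℤ):ℝ)) = -(Real.pi/2) by push_cast; ring,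
      show ((-1:ℤ):ℝ) * z = -z by push_cast; ring]
    simp only [exp_I_ofReal, Real.cos_neg, Real.sin_neg, c1, s1, Real.cos_zero,
      Real.sin_zero, Lfun]
    push_cast
    ring
  · rw [show ((0:ℤ):ℝ) * (Real.pi/2 * ((-1:ℤ):ℝ)) = 0 by push_cast; ring,
      show ((0:ℤ):ℝ) * (Real.pi/2 * ((0:ℤ):ℝ)) = 0 by push_cast; ring,
      show ((0:ℤ):ℝ) * (Real.pi/2 * ((1:ℤ):ℝ)) = 0 by push_cast; ring,
      show ((0:ℤ):ℝ) * z = 0 by push_cast; ring]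
    simp only [exp_I_ofReal, c1, s1, Real.cos_zero, Real.sin_zero, Lfun]
    push_cast
    ring
  · rw [show ((1:ℤ):ℝ) * (Real.pi/2 * ((-1:ℤ):ℝ)) = -(Real.pi/2) by push_cast; ring,
      show ((1:ℤ):ℝ) * (Real.pi/2 * ((0:ℤ):ℝ)) = 0 by push_cast; ring,
      show ((1:ℤ):ℝ) * (Real.pi/2 * ((1:ℤ):ℝ)) = Real.pi/2 by push_cast; ring,
      show ((1:ℤ):ℝ) * z = z by push_cast; ring]
    simp only [exp_I_ofReal, Real.cos_neg, Real.sin_neg, c1, s1, Real.cos_zero,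
      Real.sin_zero, Lfun]
    push_cast
    ring

lemma exp_dot_prod {m : ℕ} (ω : Fin m → ℤ) (x : Fin m → ℝ) :
    Complex.exp (Complex.I * ((dotZ ω x : ℝ) : ℂ))
      = ∏ j, Complex.exp (Complex.I * (((ω j : ℝ) * x j : ℝ) : ℂ)) := by
  rw [dotZ, Complex.ofReal_sum, Finset.mul_sum, Complex.exp_sum]

lemma expand {m : ℕ} (c : (Fin m → ℤ) → ℂ) (z : Fin m → ℝ) :
    ∑ τ ∈ Omega m,
        (∑ ω ∈ Omega m, c ω * Complex.exp (Complex.I * ((dotZ ω (Qt τ) : ℝ) : ℂ)))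
          * ∏ j, Lfun (τ j) (z j)
      = ∑ ω ∈ Omega m, c ω * Complex.exp (Complex.I * ((dotZ ω z : ℝ) : ℂ)) := by
  simp_rw [Finset.sum_mul]
  rw [Finset.sum_comm]
  refine Finset.sum_congr rfl fun ω hω => ?_
  have key : ∀ τ : Fin m → ℤ,
      Complex.exp (Complex.I * ((dotZ ω (Qt τ) : ℝ) : ℂ)) * ∏ j, Lfun (τ j) (z j)
        = ∏ j, (Complex.exp (Complex.I * (((ω j : ℝ) * (Real.pi/2 * (τ j : ℝ)) : ℝ) : ℂ))
            * Lfun (τ j) (z j)) := by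
    intro τ
    rw [exp_dot_prod, ← Finset.prod_mul_distrib]
    simp only [Qt]
  simp_rw [mul_assoc, key, ← Finset.mul_sum]
  congr 1
  rw [show Omega m = Fintype.piFinset (fun _ : Fin m => ({-1,0,1} : Finset ℤ)) from rfl,
    ← Finset.prod_univ_sum (fun _ : Fin m => ({-1,0,1} : Finset ℤ))
      (fun j t => Complex.exp (Complex.I * (((ω j : ℝ) * (Real.pi/2 * (t:ℝ)) : ℝ) : ℂ))
        * Lfun t (z j))]
  rw [exp_dot_prod]
  exact Finset.prod_congr rfl fun j _ => uni (ω j) (mem_Omega hω j) (z j)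

lemma Qt_mem_grid3 {m : ℕ} {τ : Fin m → ℤ} (hτ : τ ∈ Omega m) : Qt τ ∈ grid3 m := by
  refine ⟨fun j => ⟨(τ j + 1).toNat, ?_⟩, ?_⟩
  · rcases mem_Omega hτ j with h | h | h <;> simp [h]
  · funext j
    rcases mem_Omega hτ j with h | h | h <;> simp [pt3, Qt, h] <;> norm_num

lemma interp {m L : ℕ} {h : (Fin m → ℝ) → ℝ} (hh : h ∈ Hset m)
    (hvan : ∀ q ∈ grid3 m ∩ Iset m L, h q = 0) {p : Fin m → ℝ} (hp : p ∈ Iset m L) :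
    h p = 0 := by
  obtain ⟨c, _hconj, hrep⟩ := hh
  have hx : (h p : ℂ) = ∑ τ ∈ Omega m, (h (Qt τ) : ℂ) * ∏ j, Lfun (τ j) (p j) := by
    rw [hrep p, ← expand c p]
    exact Finset.sum_congr rfl fun τ _ => by rw [hrep (Qt τ)]
  have hzero : ∀ τ ∈ Omega m, (h (Qt τ) : ℂ) * ∏ j, Lfun (τ j) (p j) = 0 := by
    intro τ hτ
    by_cases hcase : ∀ j, τ j ≠ 0 → p j ≠ 0
    · have h2 : Qt τ ∈ Iset m L := by
        refine le_trans (Set.ncard_le_ncard ?_ (Set.toFinite _)) hp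
        intro j hj
        simp only [Qt, Set.mem_setOf_eq] at hj ⊢
        refine hcase j fun h0 => hj ?_
        rw [h0]; simp
      rw [hvan _ ⟨Qt_mem_grid3 hτ, h2⟩]
      simp
    · push_neg at hcase
      obtain ⟨j, hj0, hpj⟩ := hcase
      rw [Finset.prod_eq_zero (Finset.mem_univ j) ?_, mul_zero]
      rw [hpj]
      refine Lfun_zero_of_ne _ ?_
      rcases mem_Omega hτ j with h | h | h
      · exact Or.inl h
      · exact absurd h hj0
      · exact Or.inr h
  rw [Finset.sum_eq_zero hzero] at hx
  exact_mod_cast hx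


lemma dotZ_neg {m : ℕ} (ω : Fin m → ℤ) (x : Fin m → ℝ) : dotZ (-ω) x = -dotZ ω x := by
  simp [dotZ, Finset.sum_neg_distrib]

lemma dotZ_sub_right {m : ℕ} (ω : Fin m → ℤ) (x z : Fin m → ℝ) :
    dotZ ω (x - z) = dotZ ω x - dotZ ω z := by
  simp [dotZ, mul_sub, Finset.sum_sub_distrib]

lemma dotZ_sub_left {m : ℕ} (ω ω' : Fin m → ℤ) (z : Fin m → ℝ) :
    dotZ (ω - ω') z = dotZ ω z - dotZ ω' z := by
  simp [dotZ, sub_mul, Finset.sum_sub_distrib]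

lemma neg_mem_Omega {m : ℕ} {ω : Fin m → ℤ} : -ω ∈ Omega m ↔ ω ∈ Omega m := by
  simp only [Omega, Fintype.mem_piFinset, Pi.neg_apply, Finset.mem_insert,
    Finset.mem_singleton]
  constructor <;> intro h j <;> have := h j <;> omega

lemma sum_exp_real {m : ℕ} (w : Fin m → ℝ) :
    (((∑ ω ∈ Omega m, Complex.exp (Complex.I * ((dotZ ω w : ℝ) : ℂ))).re : ℝ) : ℂ)
      = ∑ ω ∈ Omega m, Complex.exp (Complex.I * ((dotZ ω w : ℝ) : ℂ)) := by
  rw [← Complex.conj_eq_iff_re]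
  rw [map_sum]
  refine Finset.sum_equiv (Equiv.neg _) (fun ω => ?_) (fun ω _ => ?_)
  · simp only [Equiv.neg_apply]
    exact neg_mem_Omega.symm
  · simp only [Equiv.neg_apply]
    rw [← Complex.exp_conj]
    congr 1
    rw [dotZ_neg]
    simp [Complex.conj_ofReal]

lemma Kker_complex {m : ℕ} (x z : Fin m → ℝ) :
    ((Kker m x z : ℝ) : ℂ)
      = ((((2*Real.pi)^m : ℝ) : ℂ))⁻¹
          * ∑ ω ∈ Omega m, Complex.exp (Complex.I * ((dotZ ω (x - z) : ℝ) : ℂ)) := by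
  rw [Kker, Complex.ofReal_mul, sum_exp_real]
  push_cast
  ring

lemma cont_expdot {m : ℕ} (k : Fin m → ℤ) :
    Continuous fun z : Fin m → ℝ => Complex.exp (Complex.I * ((dotZ k z : ℝ) : ℂ)) := by
  apply Complex.continuous_exp.comp
  apply Continuous.mul continuous_const
  apply Complex.continuous_ofReal.comp
  unfold dotZ
  exact continuous_finset_sum _ fun j _ => continuous_const.mul (continuous_apply j)

lemma box_compact (m : ℕ) : IsCompact (box m) :=
  isCompact_univ_pi fun _ => isCompact_Icc

lemma box_measurable (m : ℕ) : MeasurableSet (box m) :=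
  MeasurableSet.univ_pi fun _ => measurableSet_Icc

lemma integrableOn_box {m : ℕ} {f : (Fin m → ℝ) → ℂ} (hf : Continuous f) :
    IntegrableOn f (box m) :=
  ContinuousOn.integrableOn_compact (box_compact m) hf.continuousOn

lemma int_exp_Icc (k : ℤ) :
    ∫ t in Set.Icc (-Real.pi) Real.pi, Complex.exp (Complex.I * (((k:ℝ) * t : ℝ) : ℂ))
      = if k = 0 then (((2*Real.pi : ℝ)) : ℂ) else 0 := by
  rw [MeasureTheory.integral_Icc_eq_integral_Ioc,
    ← intervalIntegral.integral_of_le (by linarith [Real.pi_pos] : -Real.pi ≤ Real.pi)]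
  by_cases hk : k = 0
  · rw [if_pos hk]
    subst hk
    simp only [Int.cast_zero, zero_mul, Complex.ofReal_zero, mul_zero, Complex.exp_zero]
    rw [intervalIntegral.integral_const, Complex.real_smul]
    push_cast
    ring
  · rw [if_neg hk]
    have h1 : ∀ t : ℝ, Complex.I * (((k:ℝ) * t : ℝ) : ℂ) = Complex.I * (k:ℂ) * (t:ℂ) := by
      intro t; push_cast; ring
    simp_rw [h1]
    have hc : Complex.I * (k:ℂ) ≠ 0 := by
      simp [Complex.I_ne_zero, Complex.ext_iff, hk]
    rw [integral_exp_mul_complex hc]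
    have e1 : Complex.exp (Complex.I * (k:ℂ) * ((Real.pi : ℝ) : ℂ)) = (-1:ℂ)^k := by
      rw [show Complex.I * (k:ℂ) * ((Real.pi : ℝ) : ℂ)
          = (k:ℂ) * ((Real.pi : ℂ) * Complex.I) by ring,
        Complex.exp_int_mul, Complex.exp_pi_mul_I]
    have e2 : Complex.exp (Complex.I * (k:ℂ) * ((-Real.pi : ℝ) : ℂ)) = (-1:ℂ)^k := by
      rw [show Complex.I * (k:ℂ) * ((-Real.pi : ℝ) : ℂ)
          = ((-k : ℤ):ℂ) * ((Real.pi : ℂ) * Complex.I) by push_cast; ring,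
        Complex.exp_int_mul, Complex.exp_pi_mul_I, zpow_neg, ← inv_zpow, inv_neg, inv_one]
    rw [e1, e2, sub_self, zero_div]

lemma int_box (m : ℕ) (k : Fin m → ℤ) :
    ∫ z in box m, Complex.exp (Complex.I * ((dotZ k z : ℝ) : ℂ))
      = if k = 0 then ((((2*Real.pi)^m : ℝ)) : ℂ) else 0 := by
  rw [← MeasureTheory.integral_indicator (box_measurable m)]
  have hind : ∀ z : Fin m → ℝ,
      (box m).indicator (fun z => Complex.exp (Complex.I * ((dotZ k z : ℝ) : ℂ))) z
        = ∏ j, (Set.Icc (-Real.pi) Real.pi).indicator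
            (fun t => Complex.exp (Complex.I * (((k j : ℝ) * t : ℝ) : ℂ))) (z j) := by
    intro z
    by_cases hz : z ∈ box m
    · rw [Set.indicator_of_mem hz, exp_dot_prod]
      exact Finset.prod_congr rfl fun j _ =>
        (Set.indicator_of_mem (hz j (Set.mem_univ j) : z j ∈ Set.Icc (-Real.pi) Real.pi)
          (fun t => Complex.exp (Complex.I * (((k j : ℝ) * t : ℝ) : ℂ)))).symm
    · rw [Set.indicator_of_notMem hz]
      have : ∃ j, z j ∉ Set.Icc (-Real.pi) Real.pi := by
        by_contra hc; push_neg at hc; exact hz fun j _ => hc j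
      obtain ⟨j, hj⟩ := this
      exact (Finset.prod_eq_zero (Finset.mem_univ j)
        (by rw [Set.indicator_of_notMem hj])).symm
  simp_rw [hind]
  rw [MeasureTheory.integral_fintype_prod_volume_eq_prod
    (fun j t => (Set.Icc (-Real.pi) Real.pi).indicator
      (fun t => Complex.exp (Complex.I * (((k j : ℝ) * t : ℝ) : ℂ))) t)]
  simp_rw [MeasureTheory.integral_indicator measurableSet_Icc, int_exp_Icc]
  by_cases hk : k = 0
  · rw [if_pos hk]
    subst hk
    simp only [Pi.zero_apply, if_pos rfl, Finset.prod_const, Finset.card_univ,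
      Fintype.card_fin]
    push_cast
    ring
  · rw [if_neg hk]
    obtain ⟨j, hj⟩ : ∃ j, k j ≠ 0 := by
      by_contra hc; push_neg at hc; exact hk (funext hc)
    exact Finset.prod_eq_zero (Finset.mem_univ j) (by rw [if_neg hj])


lemma Kfun_mem_Hset {m : ℕ} (x : Fin m → ℝ) : Kfun m x ∈ Hset m := by
  refine ⟨fun ω => ((((2*Real.pi)^m : ℝ) : ℂ))⁻¹
      * Complex.exp (-(Complex.I * ((dotZ ω x : ℝ) : ℂ))), fun ω => ?_, fun z => ?_⟩
  · beta_reduce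
    rw [dotZ_neg]
    rw [map_mul, map_inv₀, Complex.conj_ofReal, ← Complex.exp_conj]
    congr 1
    simp [Complex.conj_ofReal]
  · show ((Kker m x z : ℝ) : ℂ) = _
    rw [Kker_complex, Finset.mul_sum]
    refine Finset.sum_equiv (Equiv.neg _) (fun ω => ?_) (fun ω _ => ?_)
    · simp only [Equiv.neg_apply]
      exact neg_mem_Omega.symm
    · simp only [Equiv.neg_apply]
      rw [mul_assoc, ← Complex.exp_add]
      congr 2
      rw [dotZ_sub_right, dotZ_neg, dotZ_neg]
      push_cast
      ring

lemma span_mem_Hset {m : ℕ} {s : Set ((Fin m → ℝ) → ℝ)} (hs : s ⊆ Hset m)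
    {v : (Fin m → ℝ) → ℝ} (hv : v ∈ Submodule.span ℝ s) : v ∈ Hset m := by
  induction hv using Submodule.span_induction with
  | mem w hw => exact hs hw
  | zero => exact ⟨0, by simp, by simp⟩
  | add a b _ _ ha hb =>
      obtain ⟨ca, hca, hra⟩ := ha
      obtain ⟨cb, hcb, hrb⟩ := hb
      refine ⟨ca + cb, fun ω => by simp [hca ω, hcb ω], fun z => ?_⟩
      simp only [Pi.add_apply, Complex.ofReal_add, hra z, hrb z, Pi.add_apply, add_mul,
        Finset.sum_add_distrib]
  | smul r a _ ha =>
      obtain ⟨ca, hca, hra⟩ := ha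
      refine ⟨fun ω => (r : ℂ) * ca ω, fun ω => by simp [hca ω, Complex.conj_ofReal],
        fun z => ?_⟩
      simp only [Pi.smul_apply, smul_eq_mul, Complex.ofReal_mul, hra z, Finset.mul_sum,
        mul_assoc]

lemma sub_mem_Hset {m : ℕ} {g v : (Fin m → ℝ) → ℝ} (hg : g ∈ Hset m) (hv : v ∈ Hset m) :
    g - v ∈ Hset m := by
  obtain ⟨cg, hcg, hrg⟩ := hg
  obtain ⟨cv, hcv, hrv⟩ := hv
  refine ⟨cg - cv, fun ω => by simp [Pi.sub_apply, hcg ω, hcv ω], fun z => ?_⟩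
  simp only [Pi.sub_apply, Complex.ofReal_sub, hrg z, hrv z, sub_mul,
    Finset.sum_sub_distrib]

lemma repro {m : ℕ} {h : (Fin m → ℝ) → ℝ} (hh : h ∈ Hset m) (x : Fin m → ℝ) :
    innerH m h (Kfun m x) = h x := by
  obtain ⟨c, _, hrep⟩ := hh
  set inv : ℂ := ((((2*Real.pi)^m : ℝ) : ℂ))⁻¹ with hinv
  set Fc : (Fin m → ℝ) → ℂ := fun z => ∑ ω ∈ Omega m, ∑ ω' ∈ Omega m,
      (c ω * inv * Complex.exp (Complex.I * ((dotZ ω' x : ℝ) : ℂ)))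
        * Complex.exp (Complex.I * ((dotZ (ω - ω') z : ℝ) : ℂ)) with hFc
  have hterm : ∀ (ω ω' : Fin m → ℤ) (z : Fin m → ℝ),
      (c ω * Complex.exp (Complex.I * ((dotZ ω z : ℝ) : ℂ)))
        * (inv * Complex.exp (Complex.I * ((dotZ ω' (x - z) : ℝ) : ℂ)))
      = (c ω * inv * Complex.exp (Complex.I * ((dotZ ω' x : ℝ) : ℂ)))
          * Complex.exp (Complex.I * ((dotZ (ω - ω') z : ℝ) : ℂ)) := by
    intro ω ω' z
    calc (c ω * Complex.exp (Complex.I * ((dotZ ω z : ℝ) : ℂ)))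
          * (inv * Complex.exp (Complex.I * ((dotZ ω' (x - z) : ℝ) : ℂ)))
        = (c ω * inv) * (Complex.exp (Complex.I * ((dotZ ω z : ℝ) : ℂ))
            * Complex.exp (Complex.I * ((dotZ ω' (x - z) : ℝ) : ℂ))) := by ring
      _ = (c ω * inv) * (Complex.exp (Complex.I * ((dotZ ω' x : ℝ) : ℂ))
            * Complex.exp (Complex.I * ((dotZ (ω - ω') z : ℝ) : ℂ))) := by
          rw [← Complex.exp_add, ← Complex.exp_add]
          congr 1
          rw [dotZ_sub_right, dotZ_sub_left]
          push_cast
          ring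
      _ = _ := by ring
  have hptw : ∀ z, ((h z * Kfun m x z : ℝ) : ℂ) = Fc z := by
    intro z
    rw [Complex.ofReal_mul, hrep z]
    rw [show ((Kfun m x z : ℝ) : ℂ) = ((Kker m x z : ℝ) : ℂ) from rfl, Kker_complex]
    rw [Finset.mul_sum, Finset.sum_mul_sum]
    exact Finset.sum_congr rfl fun ω _ => Finset.sum_congr rfl fun ω' _ => hterm ω ω' z
  have hcontFc : Continuous Fc := by
    apply continuous_finset_sum
    intro ω _
    apply continuous_finset_sum
    intro ω' _
    exact continuous_const.mul (cont_expdot _)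
  have step1 : innerH m h (Kfun m x) = (∫ z in box m, Fc z).re := by
    rw [innerH]
    have : ∀ z : Fin m → ℝ, h z * Kfun m x z = (Fc z).re := by
      intro z
      rw [← hptw z, Complex.ofReal_re]
    simp_rw [this]
    exact integral_re (integrableOn_box hcontFc)
  have step2 : ∫ z in box m, Fc z = (h x : ℂ) := by
    rw [hFc]
    rw [MeasureTheory.integral_finset_sum _ (fun ω _ => ?_)]
    swap
    · apply integrableOn_box
      apply continuous_finset_sum
      intro ω' _
      exact continuous_const.mul (cont_expdot _)
    have : ∀ ω ∈ Omega m, ∫ z in box m, ∑ ω' ∈ Omega m,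
        (c ω * inv * Complex.exp (Complex.I * ((dotZ ω' x : ℝ) : ℂ)))
          * Complex.exp (Complex.I * ((dotZ (ω - ω') z : ℝ) : ℂ))
        = ∑ ω' ∈ Omega m, (c ω * inv * Complex.exp (Complex.I * ((dotZ ω' x : ℝ) : ℂ)))
            * (if ω - ω' = 0 then ((((2*Real.pi)^m : ℝ)) : ℂ) else 0) := by
      intro ω _
      rw [MeasureTheory.integral_finset_sum _
        (f := fun ω' z => (c ω * inv * Complex.exp (Complex.I * ((dotZ ω' x : ℝ) : ℂ)))
          * Complex.exp (Complex.I * ((dotZ (ω - ω') z : ℝ) : ℂ)))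
        (fun ω' _ => integrableOn_box (continuous_const.mul (cont_expdot _)))]
      refine Finset.sum_congr rfl fun ω' _ => ?_
      rw [MeasureTheory.integral_const_mul, int_box]
    rw [Finset.sum_congr rfl this]
    have hP : ((((2*Real.pi)^m : ℝ)) : ℂ) ≠ 0 :=
      Complex.ofReal_ne_zero.mpr (pow_ne_zero _ (by positivity))
    rw [hrep x]
    refine Finset.sum_congr rfl fun ω hω => ?_
    rw [Finset.sum_eq_single ω]
    · rw [if_pos (sub_self ω), hinv]
      field_simp
    · intro ω' _ hne
      rw [if_neg (by simpa [sub_eq_zero] using fun hh => hne hh.symm), mul_zero]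
    · intro hmem
      exact absurd hω hmem
  rw [step1, step2, Complex.ofReal_re]

end Aux

/-- the orthogonal projection of `g ∈ H` onto
`V = span{K_q : q ∈ ((π/2)·{-1,0,1}^m) ∩ I_L}` coincides with `g` on all of `I_L`;
in particular, if `L = m` then it equals `g`. -/
theorem projection_coincides_on_IL (m : ℕ) (hm : 0 < m) (L : ℕ) (hL : L ≤ m)
    (g : (Fin m → ℝ) → ℝ) (hg : g ∈ Hset m)
    (v : (Fin m → ℝ) → ℝ)
    (hvV : v ∈ Submodule.span ℝ (Kfun m '' (grid3 m ∩ Iset m L)))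
    (horth : ∀ w ∈ Submodule.span ℝ (Kfun m '' (grid3 m ∩ Iset m L)),
      innerH m (g - v) w = 0) :
    (∀ p ∈ Iset m L, v p = g p) ∧ (L = m → v = g) := by
  have hv : v ∈ Hset m := by
    refine span_mem_Hset ?_ hvV
    rintro _ ⟨q, -, rfl⟩
    exact Kfun_mem_Hset q
  have hgv : g - v ∈ Hset m := sub_mem_Hset hg hv
  have hvan : ∀ q ∈ grid3 m ∩ Iset m L, (g - v) q = 0 := by
    intro q hq
    have h0 := horth (Kfun m q) (Submodule.subset_span ⟨q, hq, rfl⟩)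
    rw [repro hgv q] at h0
    exact h0
  have key : ∀ p ∈ Iset m L, v p = g p := by
    intro p hp
    have h1 := interp hgv hvan hp
    rw [Pi.sub_apply] at h1
    linarith
  refine ⟨key, fun hLm => ?_⟩
  subst hLm
  funext p
  refine key p ?_
  refine le_trans (Set.ncard_le_ncard (Set.subset_univ _) (Set.toFinite _)) ?_
  rw [Set.ncard_univ]
  simp
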